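/- Let α : ℝ → ℝ be a class-K function (strictly increasing with α(0) = 0) that is Lipschitz with constant K ≥ 0. Let h : ℝ → ℝ be differentiable with h(0) > 0, and suppose that for every t ≥ 0 with h(t) ≥ 0 one has (deriv h) t + α(h t) ≥ 0. Then h(t) ≥ h(0) · exp(-K t) for every t ≥ 0; in particular h(t) > 0 for all t ≥ 0. -/

import Mathlib

open Real Set

private lemma cbf_aux (α : ℝ → ℝ) (K : ℝ) (hK : 0 ≤ K)
    (hα0 : α 0 = 0) (hα_lip : LipschitzWith (Real.toNNReal K) α)
    (h : ℝ → ℝ) (hdiff : Differentiable ℝ h)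
    (hcond : ∀ t, 0 ≤ t → h t ≥ 0 → deriv h t + α (h t) ≥ 0)
    (t : ℝ) (ht : 0 ≤ t) (hpos : ∀ s ∈ Set.Ioo (0:ℝ) t, 0 ≤ h s) :
    h 0 * Real.exp (-K * t) ≤ h t := by
  have hαle : ∀ x : ℝ, 0 ≤ x → α x ≤ K * x := by
    intro x hx
    have hd := hα_lip.dist_le_mul x 0
    rw [Real.dist_eq, Real.dist_eq, hα0, sub_zero] at hd
    have hc : ((Real.toNNReal K : NNReal) : ℝ) = K := Real.coe_toNNReal K hK
    rw [hc, sub_zero, abs_of_nonneg hx] at hd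
    exact (le_abs_self _).trans hd
  set u : ℝ → ℝ := fun s => h s * Real.exp (K * s) with hu_def
  have hud : ∀ s : ℝ, HasDerivAt u
      (deriv h s * Real.exp (K * s) + h s * (Real.exp (K * s) * K)) s := by
    intro s
    have h2 := ((hdiff s).hasDerivAt).mul (((hasDerivAt_id s).const_mul K).exp)
    simp only [id, mul_one] at h2
    exact h2
  have hmono : MonotoneOn u (Set.Icc 0 t) := by
    apply monotoneOn_of_deriv_nonneg (convex_Icc 0 t)
    · exact (hdiff.continuous.mul (Real.continuous_exp.comp (continuous_const.mul
        continuous_id))).continuousOn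
    · intro s _
      exact (hud s).differentiableAt.differentiableWithinAt
    · intro s hs
      rw [interior_Icc] at hs
      have hhs : 0 ≤ h s := hpos s hs
      have h1 : deriv h s + α (h s) ≥ 0 := hcond s hs.1.le hhs
      have h2 : α (h s) ≤ K * h s := hαle _ hhs
      rw [(hud s).deriv]
      have hep : 0 < Real.exp (K * s) := Real.exp_pos _
      nlinarith [hep]
  have h01 : u 0 ≤ u t := hmono (Set.left_mem_Icc.2 ht) (Set.right_mem_Icc.2 ht) ht
  have hu0 : u 0 = h 0 := by simp [hu_def]
  rw [hu0] at h01
  have hep : 0 < Real.exp (K * t) := Real.exp_pos _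
  have hinv : Real.exp (-K * t) * Real.exp (K * t) = 1 := by
    rw [← Real.exp_add]; ring_nf; exact Real.exp_zero
  have hepneg : 0 < Real.exp (-K * t) := Real.exp_pos _
  have hut : u t = h t * Real.exp (K * t) := rfl
  rw [hut] at h01
  calc h 0 * Real.exp (-K * t) ≤ (h t * Real.exp (K * t)) * Real.exp (-K * t) :=
        mul_le_mul_of_nonneg_right h01 hepneg.le
    _ = h t * (Real.exp (-K * t) * Real.exp (K * t)) := by ring
    _ = h t := by rw [hinv, mul_one]

/-- Forward invariance with a Lipschitz class-K function: if `α` is strictly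
increasing with `α 0 = 0` and Lipschitz with constant `K ≥ 0`, `h` is
differentiable with `h 0 > 0`, and the CBF condition `h' t + α (h t) ≥ 0`
holds for every `t ≥ 0` at which `h t ≥ 0`, then `h t ≥ h 0 * exp (-K * t)`
for all `t ≥ 0`; in particular `h t > 0` for all `t ≥ 0`. -/
theorem cbf_lipschitz_classK_invariance (α : ℝ → ℝ) (K : ℝ) (hK : 0 ≤ K)
    (hα_mono : StrictMono α) (hα0 : α 0 = 0)
    (hα_lip : LipschitzWith (Real.toNNReal K) α)
    (h : ℝ → ℝ) (hdiff : Differentiable ℝ h) (h0 : h 0 > 0)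
    (hcond : ∀ t, 0 ≤ t → h t ≥ 0 → deriv h t + α (h t) ≥ 0) :
    ∀ t, 0 ≤ t → h t ≥ h 0 * Real.exp (-K * t) ∧ h t > 0 := by
  have hnonneg : ∀ t, 0 ≤ t → 0 ≤ h t := by
    by_contra hcontra
    push_neg at hcontra
    obtain ⟨t, ht, htneg⟩ := hcontra
    set S : Set ℝ := {s ∈ Set.Icc 0 t | h s ≤ 0} with hS_def
    have hSne : S.Nonempty := ⟨t, ⟨Set.right_mem_Icc.2 ht, htneg.le⟩⟩
    have hSclosed : IsClosed S :=
      (isClosed_Icc).inter (isClosed_le hdiff.continuous continuous_const)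
    have hSbdd : BddBelow S := ⟨0, fun s hs => hs.1.1⟩
    set c := sInf S with hc_def
    have hcS : c ∈ S := hSclosed.csInf_mem hSne hSbdd
    have hc0 : 0 ≤ c := hcS.1.1
    have hcneg : h c ≤ 0 := hcS.2
    have hlt : ∀ s ∈ Set.Ioo (0:ℝ) c, 0 ≤ h s := by
      intro s hs
      by_contra hsneg
      push_neg at hsneg
      have hsS : s ∈ S := ⟨⟨hs.1.le, hs.2.le.trans hcS.1.2⟩, hsneg.le⟩
      exact absurd (csInf_le hSbdd hsS) (not_le.2 hs.2)
    have := cbf_aux α K hK hα0 hα_lip h hdiff hcond c hc0 hlt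
    have hep : 0 < Real.exp (-K * c) := Real.exp_pos _
    nlinarith
  intro t ht
  have hle := cbf_aux α K hK hα0 hα_lip h hdiff hcond t ht
    (fun s hs => hnonneg s hs.1.le)
  have hep : 0 < Real.exp (-K * t) := Real.exp_pos _
  exact ⟨hle, lt_of_lt_of_le (by positivity) hle⟩
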